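/- Let y11, y21, y31, y32 be integers with y11 > 0, y21 > 0, y32 > 0, −y32 ≤ 2·y31 ≤ 0, and y32 ≠ 1, let M be the 3×2 matrix with rows (y11, 0), (y21, 0), (y31, y32), and let X = M^SACG. Then: χ(X) = 2 if and only if y11 + y21 + y31 and y32 are both even; χ(X) = 4 if and only if y11 = y21 = 1, y31 = −1, y32 > 1, and 3 does not divide y32; and otherwise χ(X) = 3. -/

import Mathlib

/-- The subgroup of `ℤ^m` generated by the columns of `M`. -/
def colSpan (m r : ℕ) (M : Matrix (Fin m) (Fin r) ℤ) : AddSubgroup (Fin m → ℤ) :=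
  AddSubgroup.closure (Set.range fun j : Fin r => fun i : Fin m => M i j)

/-- The standardized Abelian Cayley graph associated to `M`. -/
def SACG (m r : ℕ) (M : Matrix (Fin m) (Fin r) ℤ) :
    SimpleGraph ((Fin m → ℤ) ⧸ colSpan m r M) where
  Adj x y := x ≠ y ∧ ∃ i : Fin m,
    x - y = QuotientAddGroup.mk (Pi.single i (1 : ℤ)) ∨
    y - x = QuotientAddGroup.mk (Pi.single i (1 : ℤ))
  symm := by
    constructor
    rintro x y ⟨hne, i, h⟩
    exact ⟨hne.symm, i, h.symm⟩
  loopless := by constructor; rintro x ⟨h, -⟩; exact h rfl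
section Graph
variable {m r : ℕ} (M : Matrix (Fin m) (Fin r) ℤ)

lemma sacg_adj_step (x : Fin m → ℤ) (i : Fin m)
    (hi : Pi.single i (1 : ℤ) ∉ colSpan m r M) :
    (SACG m r M).Adj (QuotientAddGroup.mk (x + Pi.single i 1)) (QuotientAddGroup.mk x) := by
  constructor
  · intro h
    rw [QuotientAddGroup.eq_iff_sub_mem] at h
    simp only [add_sub_cancel_left] at h
    exact hi h
  · refine ⟨i, Or.inl ?_⟩
    rw [← QuotientAddGroup.mk_sub]
    congr 1
    abel

/-- Lift a coloring of the SACG to a function on `Fin m → ℤ`. -/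
lemma coloring_lift {k : ℕ} (C : (SACG m r M).Coloring (Fin k)) :
    ∃ g : (Fin m → ℤ) → Fin k,
      (∀ x h, h ∈ colSpan m r M → g (x + h) = g x) ∧
      (∀ x (i : Fin m), Pi.single i (1:ℤ) ∉ colSpan m r M → g (x + Pi.single i 1) ≠ g x) := by
  refine ⟨fun x => C (QuotientAddGroup.mk x), fun x h hh => ?_, fun x i hi => ?_⟩
  · have : (QuotientAddGroup.mk (x + h) : (Fin m → ℤ) ⧸ colSpan m r M) =
        QuotientAddGroup.mk x := by
      rw [QuotientAddGroup.eq_iff_sub_mem]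
      simpa using hh
    exact congrArg C this
  · exact C.valid (sacg_adj_step M x i hi)

end Graph

/-- A function invariant under all unit steps is constant. -/
lemma const_of_step {α : Type*} (f : (Fin 3 → ℤ) → α)
    (h : ∀ x (i : Fin 3), f (x + Pi.single i 1) = f x) : ∀ x, f x = f 0 := by
  have h' : ∀ (x : Fin 3 → ℤ) (i : Fin 3) (k : ℤ), f (x + Pi.single i k) = f x := by
    intro x i k
    induction k using Int.induction_on with
    | zero => simp
    | succ n ih =>
        have : x + Pi.single i ((n : ℤ) + 1) = (x + Pi.single i (n : ℤ)) + Pi.single i 1 := by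
          rw [Pi.single_add]; abel
        rw [this, h, ih]
    | pred n ih =>
        have key : x + Pi.single i (-(n : ℤ)) =
            (x + Pi.single i (-(n : ℤ) - 1)) + Pi.single i 1 := by
          have e : (-(n : ℤ)) = (-(n:ℤ) - 1) + 1 := by ring
          conv_lhs => rw [e]
          rw [Pi.single_add]; abel
        have h2 := h (x + Pi.single i (-(n : ℤ) - 1)) i
        rw [← key, ih] at h2
        exact h2.symm
  intro x
  have hx : x = ((0 + Pi.single (0 : Fin 3) (x 0)) + Pi.single (1 : Fin 3) (x 1))
      + Pi.single (2 : Fin 3) (x 2) := by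
    funext i
    fin_cases i <;> simp
  rw [hx, h', h', h']
lemma mem_colSpan_iff (y11 y21 y31 y32 : ℤ) (v : Fin 3 → ℤ) :
    v ∈ colSpan 3 2 !![y11, 0; y21, 0; y31, y32] ↔
      ∃ a b : ℤ, v 0 = a * y11 ∧ v 1 = a * y21 ∧ v 2 = a * y31 + b * y32 := by
  constructor
  · intro hv
    induction hv using AddSubgroup.closure_induction with
    | mem x hx =>
        obtain ⟨j, rfl⟩ := hx
        fin_cases j
        · exact ⟨1, 0, by norm_num, by norm_num, by norm_num; rfl⟩
        · exact ⟨0, 1, by norm_num, by norm_num, by norm_num; rfl⟩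
    | zero => exact ⟨0, 0, by norm_num, by norm_num, by norm_num⟩
    | add x y hx hy ihx ihy =>
        obtain ⟨a, b, h1, h2, h3⟩ := ihx
        obtain ⟨a', b', h1', h2', h3'⟩ := ihy
        exact ⟨a + a', b + b', by simp [h1, h1']; ring, by simp [h2, h2']; ring,
          by simp [h3, h3']; ring⟩
    | neg x hx ihx =>
        obtain ⟨a, b, h1, h2, h3⟩ := ihx
        exact ⟨-a, -b, by simp [h1], by simp [h2], by simp [h3]; ring⟩
  · rintro ⟨a, b, h0, h1, h2⟩
    have hv : v = a • (fun i => !![y11, 0; y21, 0; y31, y32] i 0)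
        + b • (fun i => !![y11, 0; y21, 0; y31, y32] i 1) := by
      funext i
      fin_cases i <;> simp [h0, h1, h2, Matrix.vecHead, Matrix.vecTail] <;> ring
    rw [hv]
    exact AddSubgroup.add_mem _
      (AddSubgroup.zsmul_mem _ (AddSubgroup.subset_closure (Set.mem_range_self (0 : Fin 2))) a)
      (AddSubgroup.zsmul_mem _ (AddSubgroup.subset_closure (Set.mem_range_self (1 : Fin 2))) b)

lemma chrom_eq {V : Type*} (G : SimpleGraph V) (n : ℕ) (h1 : G.Colorable (n+1))
    (h2 : ¬ G.Colorable n) : G.chromaticNumber = (n+1 : ℕ) := by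
  refine le_antisymm h1.chromaticNumber_le ?_
  by_contra hlt
  push_neg at hlt
  have h3 : G.chromaticNumber ≤ (n : ℕ∞) := by
    push_cast at hlt
    exact (ENat.lt_add_one_iff (show (n:ℕ∞) ≠ ⊤ by simp)).mp hlt
  exact h2 (SimpleGraph.chromaticNumber_le_iff_colorable.mp h3)

lemma level_ne {c N a t t' : ℤ} (hN : 0 < N) (h1 : N ≤ c * a) (h2 : c * a ≤ (c - 1) * N)
    (ht0 : 0 ≤ t) (htN : t < N) (ht0' : 0 ≤ t') (htN' : t' < N)
    (hrel : (t + a) % N = t') : c * t / N ≠ c * t' / N := by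
  intro hEq
  have hc2 : (2:ℤ) ≤ c := by nlinarith
  have ha0 : 0 < a := by nlinarith
  have haN : a < N := by nlinarith
  have e1 : c * t = N * (c * t / N) + (c * t) % N := (Int.mul_ediv_add_emod _ _).symm
  have e2 : c * t' = N * (c * t' / N) + (c * t') % N := (Int.mul_ediv_add_emod _ _).symm
  have r1 : 0 ≤ (c * t) % N := Int.emod_nonneg _ (ne_of_gt hN)
  have r2 : (c * t) % N < N := Int.emod_lt_of_pos _ hN
  have r3 : 0 ≤ (c * t') % N := Int.emod_nonneg _ (ne_of_gt hN)
  have r4 : (c * t') % N < N := Int.emod_lt_of_pos _ hN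
  have e3 : t + a = N * ((t + a) / N) + t' := by
    conv_lhs => rw [← Int.mul_ediv_add_emod (t + a) N]
    rw [hrel]
  set q := (t + a) / N with hq
  have hq0 : 0 ≤ q := by nlinarith
  have hq1 : q ≤ 1 := by nlinarith
  interval_cases q
  · -- t' = t + a
    have ht' : t' = t + a := by linarith
    have : c * t' = c * t + c * a := by rw [ht']; ring
    nlinarith [hEq, e1, e2, this]
  · have ht' : t' = t + a - N := by linarith
    have : c * t' = c * t + c * a - c * N := by rw [ht']; ring
    nlinarith [hEq, e1, e2, this]

lemma colorable_of_system (y11 y21 y31 y32 : ℤ) (c : ℕ) (N : ℤ) (A : Fin 3 → ℤ) (hN : 0 < N)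
    (hA : ∀ i, N ≤ (c:ℤ) * A i ∧ (c:ℤ) * A i ≤ ((c:ℤ) - 1) * N)
    (d1 : N ∣ A 0 * y11 + A 1 * y21 + A 2 * y31) (d2 : N ∣ A 2 * y32) :
    (SACG 3 2 !![y11, 0; y21, 0; y31, y32]).Colorable c := by
  classical
  set dotA : (Fin 3 → ℤ) → ℤ := fun x => A 0 * x 0 + A 1 * x 1 + A 2 * x 2 with hdot
  have lin : ∀ u v : Fin 3 → ℤ, dotA (u - v) = dotA u - dotA v := by
    intro u v; simp only [hdot, Pi.sub_apply]; ring
  have dsingle : ∀ i : Fin 3, dotA (Pi.single i 1) = A i := by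
    intro i; fin_cases i <;> simp [hdot]
  have dvd_mem : ∀ h ∈ colSpan 3 2 !![y11, 0; y21, 0; y31, y32], N ∣ dotA h := by
    intro h hh
    rw [mem_colSpan_iff] at hh
    obtain ⟨a, b, h0, h1, h2⟩ := hh
    have he : dotA h = a * (A 0 * y11 + A 1 * y21 + A 2 * y31) + b * (A 2 * y32) := by
      simp only [hdot, h0, h1, h2]; ring
    rw [he]
    exact dvd_add (d1.mul_left a) (d2.mul_left b)
  have key : ∀ x : Fin 3 → ℤ, 0 ≤ dotA x % N ∧ dotA x % N < N := fun x =>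
    ⟨Int.emod_nonneg _ (ne_of_gt hN), Int.emod_lt_of_pos _ hN⟩
  have hc2 : (2:ℤ) ≤ (c:ℤ) := by
    have h0 := (hA 0).1; have h0' := (hA 0).2
    nlinarith
  have bound : ∀ x : Fin 3 → ℤ, ((c : ℤ) * (dotA x % N) / N).toNat < c := by
    intro x
    have h1 := (key x).1; have h2 := (key x).2
    have hlt : (c:ℤ) * (dotA x % N) / N < (c:ℤ) := by
      rw [Int.ediv_lt_iff_lt_mul hN]; nlinarith
    have h0 : 0 ≤ (c:ℤ) * (dotA x % N) / N := Int.ediv_nonneg (by positivity) (le_of_lt hN)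
    omega
  set cf : (Fin 3 → ℤ) → Fin c := fun x => ⟨((c : ℤ) * (dotA x % N) / N).toNat, bound x⟩
    with hcf
  have compat : ∀ x y : Fin 3 → ℤ,
      @Setoid.r _ (QuotientAddGroup.leftRel (colSpan 3 2 !![y11, 0; y21, 0; y31, y32])) x y →
      cf x = cf y := by
    intro x y hxy
    rw [QuotientAddGroup.leftRel_apply] at hxy
    have hd := dvd_mem _ hxy
    have he : dotA (-x + y) = dotA y - dotA x := by
      simp only [hdot, Pi.add_apply, Pi.neg_apply]; ring
    rw [he] at hd
    have : dotA x % N = dotA y % N := Int.modEq_iff_dvd.mpr hd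
    simp only [hcf, this]
  -- the step inequality, used in both directions
  have main : ∀ (x y : Fin 3 → ℤ) (i : Fin 3),
      (x - y) - Pi.single i 1 ∈ colSpan 3 2 !![y11, 0; y21, 0; y31, y32] → cf x ≠ cf y := by
    intro x y i hmem hcfeq
    have hdvd := dvd_mem _ hmem
    have he : dotA (x - y - Pi.single i 1) = dotA x - (dotA y + A i) := by
      rw [lin, lin, dsingle]; ring
    rw [he] at hdvd
    have m0 : (dotA y + A i) % N = dotA x % N := Int.modEq_iff_dvd.mpr hdvd
    have m1 : (dotA y) % N = (dotA y % N) % N := (Int.emod_emod_of_dvd _ dvd_rfl).symm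
    have m2 : (dotA y % N + A i) % N = dotA x % N := by
      rw [← m0]
      exact Int.ModEq.add_right (A i) m1.symm
    have hne := level_ne hN (hA i).1 (hA i).2 (key y).1 (key y).2 (key x).1 (key x).2 m2
    apply hne
    have hv := congrArg Fin.val hcfeq
    simp only [hcf, Fin.val_mk] at hv
    have n1 : 0 ≤ (c:ℤ) * (dotA x % N) / N :=
      Int.ediv_nonneg (mul_nonneg (by positivity) (key x).1) hN.le
    have n2 : 0 ≤ (c:ℤ) * (dotA y % N) / N :=
      Int.ediv_nonneg (mul_nonneg (by positivity) (key y).1) hN.le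
    omega
  let colq : ((Fin 3 → ℤ) ⧸ colSpan 3 2 !![y11, 0; y21, 0; y31, y32]) → Fin c :=
    fun q => Quotient.liftOn' q cf compat
  have valid : ∀ u v, (SACG 3 2 !![y11, 0; y21, 0; y31, y32]).Adj u v → colq u ≠ colq v := by
    intro u v huv
    induction u using QuotientAddGroup.induction_on with
    | H x =>
      induction v using QuotientAddGroup.induction_on with
      | H y =>
        obtain ⟨hne, i, hcase⟩ := huv
        rcases hcase with hcase | hcase
        · rw [← QuotientAddGroup.mk_sub, QuotientAddGroup.eq_iff_sub_mem] at hcase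
          exact main x y i hcase
        · rw [← QuotientAddGroup.mk_sub, QuotientAddGroup.eq_iff_sub_mem] at hcase
          exact fun h => main y x i hcase h.symm
  exact ⟨SimpleGraph.Coloring.mk colq fun h => valid _ _ h⟩

lemma single_not_mem {y11 y21 y31 y32 : ℤ} (h11 : 0 < y11) (h21 : 0 < y21) (h32 : 1 < y32)
    (i : Fin 3) : Pi.single i (1:ℤ) ∉ colSpan 3 2 !![y11, 0; y21, 0; y31, y32] := by
  intro hmem
  rw [mem_colSpan_iff] at hmem
  obtain ⟨a, b, h0, h1, h2⟩ := hmem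
  fin_cases i <;> simp [Pi.single_apply] at h0 h1 h2
  · rcases h1 with rfl | rfl
    · simp at h0
    · omega
  · rcases h0 with rfl | rfl
    · simp at h1
    · omega
  · rcases h0 with rfl | rfl
    · simp at h2
      rcases Int.isUnit_iff.mp (IsUnit.of_mul_eq_one (a := y32) b (by linear_combination -h2)) with h | h <;>
        omega
    · omega

lemma not_colorable_one {y11 y21 y31 y32 : ℤ} (h11 : 0 < y11) (h21 : 0 < y21) (h32 : 1 < y32) :
    ¬ (SACG 3 2 !![y11, 0; y21, 0; y31, y32]).Colorable 1 := by
  rintro ⟨C⟩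
  have adj := sacg_adj_step !![y11, 0; y21, 0; y31, y32] 0 0 (single_not_mem h11 h21 h32 0)
  exact C.valid adj (Subsingleton.elim _ _)

lemma two_dvd_of_colorable_two {y11 y21 y31 y32 : ℤ} (h11 : 0 < y11) (h21 : 0 < y21)
    (h32 : 1 < y32) (hC : (SACG 3 2 !![y11, 0; y21, 0; y31, y32]).Colorable 2) :
    (2:ℤ) ∣ (y11 + y21 + y31) ∧ (2:ℤ) ∣ y32 := by
  obtain ⟨C⟩ := hC
  obtain ⟨g, ginv, gstep⟩ := coloring_lift _ C
  set G2 : (Fin 3 → ℤ) → ZMod 2 := fun x => ((g x).val : ZMod 2) with hG2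
  have inj : ∀ a b : Fin 2, ((a.val : ZMod 2) = (b.val : ZMod 2)) → a = b := by decide
  have flip : ∀ a b : Fin 2, a ≠ b → ((a.val : ZMod 2) = (b.val : ZMod 2) + 1) := by decide
  have step : ∀ (x : Fin 3 → ℤ) (i : Fin 3), G2 (x + Pi.single i 1) = G2 x + 1 := by
    intro x i
    exact flip _ _ (gstep x i (single_not_mem h11 h21 h32 i))
  set φ : (Fin 3 → ℤ) → ZMod 2 := fun x => ((x 0 + x 1 + x 2 : ℤ) : ZMod 2) with hφ
  have φstep : ∀ (x : Fin 3 → ℤ) (i : Fin 3), φ (x + Pi.single i 1) = φ x + 1 := by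
    intro x i
    fin_cases i <;>
      · simp only [hφ, Pi.add_apply, Pi.single_apply]
        norm_num
        push_cast
        ring
  have Dconst := const_of_step (fun x => G2 x - φ x) (by
    intro x i
    simp only [step, φstep]
    ring)
  have main : ∀ x : Fin 3 → ℤ, G2 x = G2 0 + φ x := by
    intro x
    have h := Dconst x
    have h0 : φ 0 = 0 := by simp [hφ]
    rw [h0] at h
    linear_combination h
  have hv1 : (![y11, y21, y31] : Fin 3 → ℤ) ∈ colSpan 3 2 !![y11, 0; y21, 0; y31, y32] :=
    (mem_colSpan_iff _ _ _ _ _).mpr ⟨1, 0, by simp, by simp, by simp⟩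
  have hv2 : (![0, 0, y32] : Fin 3 → ℤ) ∈ colSpan 3 2 !![y11, 0; y21, 0; y31, y32] :=
    (mem_colSpan_iff _ _ _ _ _).mpr ⟨0, 1, by simp, by simp, by simp⟩
  have key : ∀ v : Fin 3 → ℤ, v ∈ colSpan 3 2 !![y11, 0; y21, 0; y31, y32] →
      ((v 0 + v 1 + v 2 : ℤ) : ZMod 2) = 0 := by
    intro v hv
    have e1 : G2 (0 + v) = G2 0 := congrArg (fun a : Fin 2 => ((a.val : ZMod 2))) (ginv 0 v hv)
    have e2 := main (0 + v)
    rw [e1] at e2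
    have : φ (0 + v) = 0 := by linear_combination e2.symm
    simpa [hφ] using this
  constructor
  · have := key _ hv1
    have h2 : ((y11 + y21 + y31 : ℤ) : ZMod 2) = 0 := by
      simpa using this
    exact (ZMod.intCast_zmod_eq_zero_iff_dvd _ 2).mp h2
  · have := key _ hv2
    have h2 : ((y32 : ℤ) : ZMod 2) = 0 := by simpa using this
    exact (ZMod.intCast_zmod_eq_zero_iff_dvd _ 2).mp h2

lemma not_colorable_three {n : ℤ} (hn : 1 < n) (h3 : ¬ (3:ℤ) ∣ n) :
    ¬ (SACG 3 2 !![1, 0; 1, 0; -1, n]).Colorable 3 := by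
  rintro ⟨C⟩
  obtain ⟨g, ginv, gstep⟩ := coloring_lift _ C
  set e0 : Fin 3 → ℤ := Pi.single 0 1 with he0
  set e1 : Fin 3 → ℤ := Pi.single 1 1 with he1
  set e2 : Fin 3 → ℤ := Pi.single 2 1 with he2
  set v1 : Fin 3 → ℤ := ![1, 1, -1] with hv1
  have hv1mem : v1 ∈ colSpan 3 2 !![1, 0; 1, 0; -1, n] :=
    (mem_colSpan_iff _ _ _ _ _).mpr ⟨1, 0, by simp [hv1], by simp [hv1], by simp [hv1]⟩
  set G3 : (Fin 3 → ℤ) → ZMod 3 := fun x => ((g x).val : ZMod 3) with hG3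
  have inj : ∀ a b : Fin 3, ((a.val : ZMod 3) = (b.val : ZMod 3)) → a = b := by decide
  have hinv : ∀ (x h : Fin 3 → ℤ), h ∈ colSpan 3 2 !![1, 0; 1, 0; -1, n] →
      G3 (x + h) = G3 x := fun x h hh =>
    congrArg (fun a : Fin 3 => ((a.val : ZMod 3))) (ginv x h hh)
  have S : ∀ (x : Fin 3 → ℤ) (i : Fin 3), G3 (x + Pi.single i 1) ≠ G3 x := by
    intro x i h
    exact gstep x i (single_not_mem one_pos one_pos hn i) (inj _ _ h)
  have hpt : ∀ x : Fin 3 → ℤ, x + e0 + e1 = (x + e2) + v1 := by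
    intro x; funext i
    fin_cases i <;> simp [he0, he1, he2, hv1, Pi.single_apply]
  have ustep : ∀ x : Fin 3 → ℤ, G3 (x + e0 + e1) ≠ G3 x := by
    intro x h
    rw [hpt x, hinv _ _ hv1mem] at h
    exact S x 2 h
  set sf : (Fin 3 → ℤ) → ZMod 3 := fun x => G3 (x + e0) - G3 x with hsf
  set tf : (Fin 3 → ℤ) → ZMod 3 := fun x => G3 (x + e1) - G3 x with htf
  set wf : (Fin 3 → ℤ) → ZMod 3 := fun x => G3 (x + e0 + e1) - G3 x with hwf
  have zfact : ∀ s t w : ZMod 3, s ≠ 0 → t ≠ 0 → w ≠ 0 → w ≠ s → w ≠ t →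
      t = s ∧ w = s + s := by
    have : ∀ s t w : Fin 3, s ≠ 0 → t ≠ 0 → w ≠ 0 → w ≠ s → w ≠ t →
        t = s ∧ w = s + s := by decide
    exact this
  have comm01 : ∀ x : Fin 3 → ℤ, x + e1 + e0 = x + e0 + e1 := fun x => by abel
  have key : ∀ x, tf x = sf x ∧ wf x = sf x + sf x := by
    intro x
    apply zfact
    · exact sub_ne_zero.mpr (S x 0)
    · exact sub_ne_zero.mpr (S x 1)
    · exact sub_ne_zero.mpr (ustep x)
    · intro h
      simp only [hwf, hsf] at h
      exact S (x + e0) 1 (sub_left_inj.mp h)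
    · intro h
      simp only [hwf, htf] at h
      have h' := sub_left_inj.mp h
      rw [← comm01 x] at h'
      exact S (x + e1) 0 h'
  have prop0 : ∀ x, sf (x + e0) = sf x := by
    intro x
    have h1 : wf x = sf (x + e0) + sf x := by
      rw [← (key (x + e0)).1]
      simp only [hwf, htf, hsf]
      abel
    have h2 := (key x).2
    exact add_right_cancel (h1.symm.trans h2)
  have prop1 : ∀ x, sf (x + e1) = sf x := by
    intro x
    have h1 : wf x = sf (x + e1) + tf x := by
      simp only [hwf, hsf, htf, comm01]
      abel
    have h2 := (key x).2
    rw [(key x).1] at h1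
    exact add_right_cancel (h1.symm.trans h2)
  have sinv : ∀ x, sf (x + v1) = sf x := by
    intro x
    simp only [hsf]
    rw [show x + v1 + e0 = (x + e0) + v1 by abel, hinv _ _ hv1mem, hinv _ _ hv1mem]
  have prop2 : ∀ x, sf (x + e2) = sf x := by
    intro x
    have hpt2 : x + e2 + v1 = x + e0 + e1 := (hpt x).symm
    calc sf (x + e2) = sf (x + e2 + v1) := (sinv (x + e2)).symm
      _ = sf (x + e0 + e1) := by rw [hpt2]
      _ = sf x := by rw [prop1 (x + e0), prop0 x]
  have sconst := const_of_step sf (by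
    intro x i
    fin_cases i
    · exact prop0 x
    · exact prop1 x
    · exact prop2 x)
  set σ : ZMod 3 := sf 0 with hσdef
  have hσ : σ ≠ 0 := sub_ne_zero.mpr (S 0 0)
  have step0 : ∀ x, G3 (x + e0) = G3 x + σ := by
    intro x
    have h := sconst x
    simp only [hsf] at h
    linear_combination h
  have step1 : ∀ x, G3 (x + e1) = G3 x + σ := by
    intro x
    have h := (key x).1
    rw [sconst x] at h
    simp only [htf] at h
    linear_combination h
  have iter : ∀ q : ℕ, G3 (q • (e0 + e1)) = G3 0 + (q : ZMod 3) * (σ + σ) := by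
    intro q
    induction q with
    | zero => simp
    | succ q ih =>
        have hq : (q+1) • (e0 + e1) = (q • (e0 + e1) + e0) + e1 := by
          rw [succ_nsmul]; abel
        rw [hq, step1, step0, ih]
        push_cast
        ring
  have hwmem : (n.toNat • (e0 + e1) : Fin 3 → ℤ) ∈ colSpan 3 2 !![1, 0; 1, 0; -1, n] := by
    refine (mem_colSpan_iff _ _ _ _ _).mpr ⟨n, 1, ?_, ?_, ?_⟩ <;>
      simp [he0, he1, Pi.single_apply, nsmul_eq_mul] <;> omega
  have hG := hinv 0 _ hwmem
  rw [zero_add] at hG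
  have hit := iter n.toNat
  rw [hG] at hit
  have hz : ((n.toNat : ℕ) : ZMod 3) * (σ + σ) = 0 := by linear_combination -hit
  have zfact2 : ∀ c σ : ZMod 3, σ ≠ 0 → c * (σ + σ) = 0 → c = 0 := by
    have : ∀ c σ : Fin 3, σ ≠ 0 → c * (σ + σ) = 0 → c = 0 := by decide
    exact this
  have h4 := zfact2 _ _ hσ hz
  rw [ZMod.natCast_eq_zero_iff] at h4
  omega

lemma exists_k (n m : ℤ) (hn : 2 ≤ n) (hm : 0 ≤ m) (hmn : 2*m ≤ n)
    (h : m ≠ 1 ∨ (3:ℤ) ∣ n) :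
    ∃ k, n ≤ 3*k ∧ 3*k ≤ 2*n ∧ (3 * (m*k % n) ≤ n ∨ 2*n ≤ 3 * (m*k % n)) := by
  by_cases h3 : (3:ℤ) ∣ n
  · obtain ⟨d, rfl⟩ := h3
    refine ⟨d, by omega, by omega, ?_⟩
    obtain ⟨q, r, hq, hr0, hr3⟩ : ∃ q r, m = 3*q + r ∧ 0 ≤ r ∧ r < 3 :=
      ⟨m / 3, m % 3, by omega, by omega, by omega⟩
    have hd1 : 1 ≤ d := by omega
    have hmd : m * d = r * d + (3*d) * q := by rw [hq]; ring
    have hrd : (m * d) % (3*d) = (r * d) % (3*d) := by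
      rw [hmd, Int.add_mul_emod_self_left]
    have hrdlt : r * d < 3 * d := by nlinarith
    have hrdnn : 0 ≤ r * d := mul_nonneg hr0 (by omega)
    rw [hrd, Int.emod_eq_of_lt hrdnn hrdlt]
    interval_cases r <;> omega
  · have hm1 : m ≠ 1 := by tauto
    rcases (by omega : m = 0 ∨ 2 ≤ m) with rfl | hm2
    · exact ⟨(n+2)/3, by omega, by omega, Or.inl (by simp; omega)⟩
    by_cases hcase : 3*m ≤ n
    · -- small m: k = ceil(j*n/m) with j = ceil(m/3)
      set j := (m+2)/3 with hj
      have hjb : m ≤ 3*j ∧ 3*j ≤ m + 2 := by omega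
      set k := (j*n + m - 1)/m with hk
      have hdm := Int.mul_ediv_add_emod (j*n + m - 1) m
      rw [← hk] at hdm
      set ρ := (j*n + m - 1) % m with hρ
      have hρb : 0 ≤ ρ ∧ ρ < m := ⟨Int.emod_nonneg _ (by omega), Int.emod_lt_of_pos _ (by omega)⟩
      have hmk : m * k = j*n + m - 1 - ρ := by omega
      have hsval : (m * k) % n = m - 1 - ρ := by
        have h1 : m * k = (m - 1 - ρ) + n * j := by linear_combination hmk
        rw [h1, Int.add_mul_emod_self_left]
        exact Int.emod_eq_of_lt (by omega) (by omega)
      refine ⟨k, ?_, ?_, ?_⟩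
      · -- n ≤ 3k
        nlinarith [hmk, hρb.1, hρb.2,
          mul_le_mul_of_nonneg_right hjb.1 (by omega : (0:ℤ) ≤ n)]
      · -- 3k ≤ 2n
        rcases (by omega : 3*j = m ∨ 3*j = m + 1 ∨ 3*j = m + 2) with h3j | h3j | h3j
        · nlinarith [hmk, hρb.1]
        · nlinarith [hmk, hρb.1]
        · have hm4 : 4 ≤ m := by omega
          nlinarith [hmk, hρb.1, mul_le_mul_of_nonneg_left hcase (by omega : (0:ℤ) ≤ m - 2)]
      · rw [hsval]; omega
    · -- large m: 3m > n
      push_neg at hcase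
      set k1 := (n+2)/3 with hk1
      set v := m * k1 % n with hv
      have hvb : 0 ≤ v ∧ v < n := ⟨Int.emod_nonneg _ (by omega), Int.emod_lt_of_pos _ (by omega)⟩
      by_cases hgood : 3 * v ≤ n ∨ 2*n ≤ 3 * v
      · exact ⟨k1, by omega, by omega, hgood⟩
      push_neg at hgood
      rcases (by omega : n ≤ 4 ∨ 5 ≤ n) with hn4 | hn5
      · -- n = 4, m = 2 : contradiction with hgood
        exfalso
        have hm2' : m = 2 := by omega
        have hn2' : n = 4 := by omega
        have hk12 : k1 = 2 := by omega
        have : m * k1 = 4 := by rw [hm2', hk12]; norm_num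
        rw [hv, this, hn2'] at hgood
        norm_num at hgood
      · refine ⟨k1 + 1, by omega, by omega, ?_⟩
        have hsplit : m * (k1 + 1) = v + m + n * (m * k1 / n) := by
          have := Int.emod_def (m * k1) n
          have h2 : m * (k1+1) = m * k1 + m := by ring
          omega
        have hs : (m * (k1+1)) % n = (v + m) % n := by
          rw [hsplit, Int.add_mul_emod_self_left]
        rcases (by omega : v + m < n ∨ n ≤ v + m) with hlt | hge
        · rw [hs, Int.emod_eq_of_lt (by omega) hlt]
          omega
        · have h1 : v + m = (v + m - n) + n * 1 := by ring
          rw [hs, h1, Int.add_mul_emod_self_left,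
            Int.emod_eq_of_lt (by omega) (by omega)]
          omega

lemma sys_big (y u m n : ℤ) (hy : 3 ≤ y) (hu : 1 ≤ u) (hn : 2 ≤ n) (hm : 0 ≤ m) :
    ∃ N B1 B2 B3 : ℤ, 0 < N ∧
      (N ≤ 3*B1 ∧ 3*B1 ≤ 2*N) ∧ (N ≤ 3*B2 ∧ 3*B2 ≤ 2*N) ∧ (N ≤ 3*B3 ∧ 3*B3 ≤ 2*N) ∧
      N ∣ (B1*y + B2*u - B3*m) ∧ N ∣ B3*n := by
  set k := (n+2)/3 with hk
  have hkb : n ≤ 3*k ∧ 3*k ≤ 2*n := by omega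
  set R := (3*m*k - n*u) % (3*n) with hR
  have hRb : 0 ≤ R ∧ R < 3*n :=
    ⟨Int.emod_nonneg _ (by omega), Int.emod_lt_of_pos _ (by omega)⟩
  obtain ⟨w, hw⟩ : ∃ w, R = 3*m*k - n*u + 3*n*w := by
    refine ⟨-((3*m*k - n*u)/(3*n)), ?_⟩
    rw [hR, Int.emod_def]
    ring
  have hdm := Int.mul_ediv_add_emod (n*y - R + 3*n - 1) (3*n)
  set j := (n*y - R + 3*n - 1)/(3*n) with hj
  set ρ := (n*y - R + 3*n - 1) % (3*n) with hρ
  have hρb : 0 ≤ ρ ∧ ρ < 3*n :=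
    ⟨Int.emod_nonneg _ (by omega), Int.emod_lt_of_pos _ (by omega)⟩
  have hny : 3*n ≤ n*y := by nlinarith
  have hnypos : 0 < n*y := by positivity
  have hky1 : n*y ≤ 3*k*y := by
    have := mul_le_mul_of_nonneg_right hkb.1 (by omega : (0:ℤ) ≤ y)
    linarith
  have hky2 : 3*k*y ≤ 2*n*y := by
    have := mul_le_mul_of_nonneg_right hkb.2 (by omega : (0:ℤ) ≤ y)
    linarith
  have hB1l : n*y ≤ R + 3*n*j := by linarith
  have hB1u : R + 3*n*j ≤ n*y + 3*n - 1 := by linarith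
  refine ⟨3*n*y, R + 3*n*j, n*y, 3*k*y, by positivity, ⟨by linarith, by linarith⟩,
    ⟨by linarith, by linarith⟩, ⟨by linarith, by linarith⟩,
    ⟨w + j, by rw [hw]; ring⟩, ⟨k, by ring⟩⟩

lemma colorable_of_system' (y11 y21 y31 y32 : ℤ) (c : ℕ) (N a1 a2 a3 : ℤ) (hN : 0 < N)
    (h1 : N ≤ (c:ℤ) * a1 ∧ (c:ℤ) * a1 ≤ ((c:ℤ) - 1) * N)
    (h2 : N ≤ (c:ℤ) * a2 ∧ (c:ℤ) * a2 ≤ ((c:ℤ) - 1) * N)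
    (h3 : N ≤ (c:ℤ) * a3 ∧ (c:ℤ) * a3 ≤ ((c:ℤ) - 1) * N)
    (d1 : N ∣ a1 * y11 + a2 * y21 + a3 * y31) (d2 : N ∣ a3 * y32) :
    (SACG 3 2 !![y11, 0; y21, 0; y31, y32]).Colorable c := by
  refine colorable_of_system y11 y21 y31 y32 c N ![a1, a2, a3] hN ?_ (by simpa) (by simpa)
  intro i
  fin_cases i <;> simpa

lemma colorable_two {y11 y21 y31 y32 : ℤ} (hd1 : (2:ℤ) ∣ (y11 + y21 + y31))
    (hd2 : (2:ℤ) ∣ y32) :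
    (SACG 3 2 !![y11, 0; y21, 0; y31, y32]).Colorable 2 := by
  refine colorable_of_system' y11 y21 y31 y32 2 2 1 1 1 (by norm_num) (by norm_num)
    (by norm_num) (by norm_num) (by simpa using hd1) (by simpa using hd2)

lemma colorable_four {n : ℤ} (hn : 2 ≤ n) :
    (SACG 3 2 !![1, 0; 1, 0; -1, n]).Colorable 4 := by
  refine colorable_of_system' 1 1 (-1) n 4 (2*n) ((n+1)/2) ((n+1)/2) (2*((n+1)/2))
    (by omega) ⟨by push_cast; omega, by push_cast; omega⟩
    ⟨by push_cast; omega, by push_cast; omega⟩ ⟨by push_cast; omega, by push_cast; omega⟩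
    ⟨0, by ring⟩ ⟨(n+1)/2, by ring⟩

lemma colorable_three {y11 y21 y31 y32 : ℤ} (h11 : 0 < y11) (h21 : 0 < y21) (h32 : 2 ≤ y32)
    (h31l : -y32 ≤ 2*y31) (h31r : y31 ≤ 0)
    (hF : y11 ≠ 1 ∨ y21 ≠ 1 ∨ y31 ≠ -1 ∨ (3:ℤ) ∣ y32) :
    (SACG 3 2 !![y11, 0; y21, 0; y31, y32]).Colorable 3 := by
  obtain ⟨m, rfl⟩ : ∃ m, y31 = -m := ⟨-y31, by ring⟩
  have hm0 : 0 ≤ m := by omega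
  have hmn : 2*m ≤ y32 := by omega
  set n := y32 with hn
  rcases (by omega : 3 ≤ y11 ∨ 3 ≤ y21 ∨ ((y11 = 1 ∨ y11 = 2) ∧ (y21 = 1 ∨ y21 = 2)))
    with hbig | hbig | ⟨hs1, hs2⟩
  · obtain ⟨N, B1, B2, B3, hN, hb1, hb2, hb3, hd1, hd2⟩ := sys_big y11 y21 m n hbig h21 h32 hm0
    refine colorable_of_system' _ _ _ _ 3 N B1 B2 B3 hN (by push_cast; omega)
      (by push_cast; omega) (by push_cast; omega) ?_ hd2
    have e : B1 * y11 + B2 * y21 + B3 * (-m) = B1*y11 + B2*y21 - B3*m := by ring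
    rw [e]; exact hd1
  · obtain ⟨N, B1, B2, B3, hN, hb1, hb2, hb3, hd1, hd2⟩ := sys_big y21 y11 m n hbig h11 h32 hm0
    refine colorable_of_system' _ _ _ _ 3 N B2 B1 B3 hN (by push_cast; omega)
      (by push_cast; omega) (by push_cast; omega) ?_ hd2
    have e : B2 * y11 + B1 * y21 + B3 * (-m) = B1*y21 + B2*y11 - B3*m := by ring
    rw [e]; exact hd1
  · -- y11, y21 ∈ {1,2}
    rcases hs1 with rfl | rfl <;> rcases hs2 with rfl | rfl
    · -- (1,1) : need the good k
      have hF' : m ≠ 1 ∨ (3:ℤ) ∣ n := by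
        rcases hF with h | h | h | h
        · omega
        · omega
        · left; omega
        · right; exact h
      obtain ⟨k, hk1, hk2, hgood⟩ := exists_k n m h32 hm0 hmn hF'
      set s := m * k % n with hs
      have hsb : 0 ≤ s ∧ s < n :=
        ⟨Int.emod_nonneg _ (by omega), Int.emod_lt_of_pos _ (by omega)⟩
      obtain ⟨q, hq⟩ : ∃ q, m * k = n * q + s := ⟨m*k/n, by rw [hs, Int.emod_def]; ring⟩
      rcases hgood with hg | hg
      · refine colorable_of_system' _ _ _ _ 3 (6*n) (3*n+3*s) (3*n+3*s) (6*k) (by omega)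
          (by push_cast; omega) (by push_cast; omega) (by push_cast; omega)
          ⟨1 - q, by linear_combination (-6) * hq⟩ ⟨k, by ring⟩
      · refine colorable_of_system' _ _ _ _ 3 (6*n) (3*s) (3*s) (6*k) (by omega)
          (by push_cast; omega) (by push_cast; omega) (by push_cast; omega)
          ⟨-q, by linear_combination (-6) * hq⟩ ⟨k, by ring⟩
    · -- (1,2)
      set k := (n+2)/3 with hk
      have hkb : n ≤ 3*k ∧ 3*k ≤ 2*n := by omega
      set s := m * k % n with hs
      have hsb : 0 ≤ s ∧ s < n :=
        ⟨Int.emod_nonneg _ (by omega), Int.emod_lt_of_pos _ (by omega)⟩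
      obtain ⟨q, hq⟩ : ∃ q, m * k = n * q + s := ⟨m*k/n, by rw [hs, Int.emod_def]; ring⟩
      rcases (by omega : 3*s ≤ n ∨ n < 3*s) with hg | hg
      · refine colorable_of_system' _ _ _ _ 3 (6*n) (2*n+6*s) (2*n) (6*k) (by omega)
          (by push_cast; omega) (by push_cast; omega) (by push_cast; omega)
          ⟨1 - q, by linear_combination (-6) * hq⟩ ⟨k, by ring⟩
      · refine colorable_of_system' _ _ _ _ 3 (6*n) (4*n) (n+3*s) (6*k) (by omega)
          (by push_cast; omega) (by push_cast; omega) (by push_cast; omega)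
          ⟨1 - q, by linear_combination (-6) * hq⟩ ⟨k, by ring⟩
    · -- (2,1)
      set k := (n+2)/3 with hk
      have hkb : n ≤ 3*k ∧ 3*k ≤ 2*n := by omega
      set s := m * k % n with hs
      have hsb : 0 ≤ s ∧ s < n :=
        ⟨Int.emod_nonneg _ (by omega), Int.emod_lt_of_pos _ (by omega)⟩
      obtain ⟨q, hq⟩ : ∃ q, m * k = n * q + s := ⟨m*k/n, by rw [hs, Int.emod_def]; ring⟩
      rcases (by omega : 3*s ≤ n ∨ n < 3*s) with hg | hg
      · refine colorable_of_system' _ _ _ _ 3 (6*n) (2*n) (2*n+6*s) (6*k) (by omega)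
          (by push_cast; omega) (by push_cast; omega) (by push_cast; omega)
          ⟨1 - q, by linear_combination (-6) * hq⟩ ⟨k, by ring⟩
      · refine colorable_of_system' _ _ _ _ 3 (6*n) (n+3*s) (4*n) (6*k) (by omega)
          (by push_cast; omega) (by push_cast; omega) (by push_cast; omega)
          ⟨1 - q, by linear_combination (-6) * hq⟩ ⟨k, by ring⟩
    · -- (2,2)
      set k := (n+2)/3 with hk
      have hkb : n ≤ 3*k ∧ 3*k ≤ 2*n := by omega
      set s := m * k % n with hs
      have hsb : 0 ≤ s ∧ s < n :=
        ⟨Int.emod_nonneg _ (by omega), Int.emod_lt_of_pos _ (by omega)⟩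
      obtain ⟨q, hq⟩ : ∃ q, m * k = n * q + s := ⟨m*k/n, by rw [hs, Int.emod_def]; ring⟩
      rcases (by omega : n ≤ 3*s ∨ 3*s < n) with hg | hg
      · refine colorable_of_system' _ _ _ _ 3 (6*n) (2*n) (n+3*s) (6*k) (by omega)
          (by push_cast; omega) (by push_cast; omega) (by push_cast; omega)
          ⟨1 - q, by linear_combination (-6) * hq⟩ ⟨k, by ring⟩
      · refine colorable_of_system' _ _ _ _ 3 (6*n) (4*n) (2*n+3*s) (6*k) (by omega)
          (by push_cast; omega) (by push_cast; omega) (by push_cast; omega)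
          ⟨2 - q, by linear_combination (-6) * hq⟩ ⟨k, by ring⟩

theorem stmt_11 (y11 y21 y31 y32 : ℤ) (h11 : 0 < y11) (h21 : 0 < y21) (h32 : 0 < y32)
    (h31l : -y32 ≤ 2 * y31) (h31r : 2 * y31 ≤ 0) (h32ne : y32 ≠ 1)
    (M : Matrix (Fin 3) (Fin 2) ℤ) (hM : M = !![y11, 0; y21, 0; y31, y32]) :
    ((SACG 3 2 M).chromaticNumber = 2 ↔ (Even (y11 + y21 + y31) ∧ Even y32)) ∧
    ((SACG 3 2 M).chromaticNumber = 4 ↔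
      (y11 = 1 ∧ y21 = 1 ∧ y31 = -1 ∧ 1 < y32 ∧ ¬ (3 : ℤ) ∣ y32)) ∧
    (¬ (Even (y11 + y21 + y31) ∧ Even y32) →
      ¬ (y11 = 1 ∧ y21 = 1 ∧ y31 = -1 ∧ 1 < y32 ∧ ¬ (3 : ℤ) ∣ y32) →
      (SACG 3 2 M).chromaticNumber = 3) := by
  subst hM
  have h32' : 2 ≤ y32 := by omega
  have h32'' : 1 < y32 := by omega
  -- basic translations
  have evenEquiv : (Even (y11 + y21 + y31) ∧ Even y32) ↔
      ((2:ℤ) ∣ (y11 + y21 + y31) ∧ (2:ℤ) ∣ y32) := by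
    rw [Int.even_iff, Int.even_iff]
    omega
  have hnotcol2 : ¬ (Even (y11 + y21 + y31) ∧ Even y32) →
      ¬ (SACG 3 2 !![y11, 0; y21, 0; y31, y32]).Colorable 2 := by
    intro hB hc
    exact hB (evenEquiv.mpr (two_dvd_of_colorable_two h11 h21 h32'' hc))
  have hcol3 : ¬ (y11 = 1 ∧ y21 = 1 ∧ y31 = -1 ∧ 1 < y32 ∧ ¬ (3 : ℤ) ∣ y32) →
      (SACG 3 2 !![y11, 0; y21, 0; y31, y32]).Colorable 3 := by
    intro hF
    refine colorable_three h11 h21 h32' h31l (by omega) ?_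
    by_contra hcon
    push_neg at hcon
    exact hF ⟨hcon.1, hcon.2.1, hcon.2.2.1, h32'', hcon.2.2.2⟩
  refine ⟨⟨?_, ?_⟩, ⟨?_, ?_⟩, ?_⟩
  · -- χ = 2 → B
    intro h2
    by_contra hB
    have hc2 : (SACG 3 2 !![y11, 0; y21, 0; y31, y32]).Colorable 2 := by
      rw [← SimpleGraph.chromaticNumber_le_iff_colorable]
      rw [h2]
      norm_num
    exact hnotcol2 hB hc2
  · -- B → χ = 2
    intro hB
    obtain ⟨hd1, hd2⟩ := evenEquiv.mp hB
    have hc2 := colorable_two hd1 hd2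
    have := chrom_eq _ 1 (by simpa using hc2) (not_colorable_one h11 h21 h32'')
    rw [this]
    norm_num
  · -- χ = 4 → F
    intro h4
    by_contra hF
    have hc3 := hcol3 hF
    have hle := hc3.chromaticNumber_le
    rw [h4] at hle
    norm_num at hle
  · -- F → χ = 4
    rintro ⟨rfl, rfl, rfl, hlt, hndvd⟩
    have := chrom_eq _ 3 (by simpa using colorable_four h32')
      (not_colorable_three h32'' hndvd)
    rw [this]
    norm_num
  · -- otherwise χ = 3
    intro hB hF
    have := chrom_eq _ 2 (by simpa using hcol3 hF) (hnotcol2 hB)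
    rw [this]
    norm_num
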